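/- For every r > 0 one has the chain of strict inequalities 1 > r·a'(r)/a(r) > r·c'(r)/c(r) > −r·b'(r)/b(r) > 0. -/

import Mathlib

/-- For the coefficient functions `a, b, c` of the Atiyah–Hitchin metric, for every `r > 0`
one has `1 > r·a'(r)/a(r) > r·c'(r)/c(r) > −r·b'(r)/b(r) > 0`. -/
theorem atiyah_hitchin_derivative_estimates
    (m : ℝ) (hm : 0 < m)
    (a b c a' b' c' a'' b'' c'' : ℝ → ℝ)
    (hca : ContinuousOn a (Set.Ici 0))
    (hcb : ContinuousOn b (Set.Ici 0))
    (hcc : ContinuousOn c (Set.Ici 0))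
    (hda : ∀ r > (0:ℝ), HasDerivAt a (a' r) r)
    (hdb : ∀ r > (0:ℝ), HasDerivAt b (b' r) r)
    (hdc : ∀ r > (0:ℝ), HasDerivAt c (c' r) r)
    (hdda : ∀ r > (0:ℝ), HasDerivAt a' (a'' r) r)
    (hddb : ∀ r > (0:ℝ), HasDerivAt b' (b'' r) r)
    (hddc : ∀ r > (0:ℝ), HasDerivAt c' (c'' r) r)
    (hODEa : ∀ r > (0:ℝ), a' r = (a r ^ 2 - (b r - c r) ^ 2) / (2 * b r * c r))
    (hODEb : ∀ r > (0:ℝ), b' r = (b r ^ 2 - (c r - a r) ^ 2) / (2 * c r * a r))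
    (hODEc : ∀ r > (0:ℝ), c' r = (c r ^ 2 - (a r - b r) ^ 2) / (2 * a r * b r))
    (hia : a 0 = 0) (hib : b 0 = -m) (hic : c 0 = m)
    (hapos : ∀ r > (0:ℝ), 0 < a r)
    (hcpos : ∀ r > (0:ℝ), 0 < c r)
    (hbneg : ∀ r > (0:ℝ), b r < 0)
    (ha' : ∀ r > (0:ℝ), 0 < a' r)
    (hb' : ∀ r > (0:ℝ), 0 < b' r)
    (hc' : ∀ r > (0:ℝ), 0 < c' r)
    (ha'' : ∀ r > (0:ℝ), a'' r < 0)
    (hac : ∀ r > (0:ℝ), a r < c r)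
    (habc : ∀ r > (0:ℝ), b r + c r < a r) :
    ∀ r > (0:ℝ),
      1 > r * a' r / a r ∧
      r * a' r / a r > r * c' r / c r ∧
      r * c' r / c r > -(r * b' r) / b r ∧
      -(r * b' r) / b r > 0 := by

  intro r hr
  have ha := hapos r hr
  have hc := hcpos r hr
  have hb := hbneg r hr
  have hbp := hb' r hr
  have hane : a r ≠ 0 := ne_of_gt ha
  have hcne : c r ≠ 0 := ne_of_gt hc
  have hbne : b r ≠ 0 := ne_of_lt hb
  -- key identities
  have key1 : c' r * b r + b' r * c r = b r + c r - a r := by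
    rw [hODEb r hr, hODEc r hr]; field_simp; ring
  have key2 : b r * (a' r * c r - c' r * a r) = (a r - c r) * (a r + c r - b r) := by
    rw [hODEa r hr, hODEc r hr]; field_simp; ring
  -- part 1 : 1 > r a'/a
  have h1 : r * a' r < a r := by
    obtain ⟨ξ, hξ, hmvt⟩ := exists_hasDerivAt_eq_slope a a' hr
      (hca.mono (by intro x hx; exact hx.1))
      (fun x hx => hda x hx.1)
    have hξ0 : 0 < ξ := hξ.1
    have hξr : ξ < r := hξ.2
    have hanti : StrictAntiOn a' (Set.Icc ξ r) := by
      apply strictAntiOn_of_deriv_neg (convex_Icc ξ r)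
      · intro x hx
        exact (hdda x (lt_of_lt_of_le hξ0 hx.1)).continuousAt.continuousWithinAt
      · intro x hx
        rw [interior_Icc] at hx
        rw [(hdda x (lt_trans hξ0 hx.1)).deriv]
        exact ha'' x (lt_trans hξ0 hx.1)
    have hlt : a' r < a' ξ :=
      hanti (Set.left_mem_Icc.2 (le_of_lt hξr)) (Set.right_mem_Icc.2 (le_of_lt hξr)) hξr
    rw [hmvt, hia] at hlt
    have : a' r * r < a r := by
      have := mul_lt_mul_of_pos_right hlt hr
      calc a' r * r < (a r - 0) / (r - 0) * r := this
        _ = a r := by rw [sub_zero, sub_zero]; field_simp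
    linarith [this, mul_comm (a' r) r]
  have p1 : 1 > r * a' r / a r := by
    rw [gt_iff_lt, div_lt_one ha]; exact h1
  -- part 2 : r a'/a > r c'/c
  have p2 : r * a' r / a r > r * c' r / c r := by
    have hD : 0 < a' r * c r - c' r * a r := by
      have hneg : (a r - c r) * (a r + c r - b r) < 0 :=
        mul_neg_of_neg_of_pos (by linarith [hac r hr]) (by linarith)
      have : a' r * c r - c' r * a r = (a r - c r) * (a r + c r - b r) / b r := by
        rw [eq_div_iff hbne]; linarith [key2, mul_comm (b r) (a' r * c r - c' r * a r)]
      rw [this]; exact div_pos_of_neg_of_neg hneg hb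
    rw [gt_iff_lt, div_lt_div_iff₀ hc ha]
    nlinarith [mul_pos hr hD]
  -- part 3
  have p3 : r * c' r / c r > -(r * b' r) / b r := by
    have hnb : 0 < -b r := by linarith
    have heq : -(r * b' r) / b r = r * b' r / (-b r) := by
      rw [div_neg, neg_div]
    rw [gt_iff_lt, heq, div_lt_div_iff₀ hnb hc]
    nlinarith [habc r hr, key1]
  -- part 4
  have p4 : -(r * b' r) / b r > 0 := by
    apply div_pos_of_neg_of_neg _ hb
    nlinarith
  exact ⟨p1, p2, p3, p4⟩
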